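/- Let A ∈ ℝ^{n×n} be symmetric positive semidefinite with A_{ij} < 0 for all i ≠ j, and suppose rank(A) = n − 1. Then there exists a vector v ∈ ℝⁿ with all entries positive such that A·v = 0 (so the null space of A is spanned by a positive vector), and moreover no vector with all entries positive lies in the column space (range) of A. -/

import Mathlib

open Matrix

/-- If `A ⪰ 0` has all off-diagonal entries negative and
`rank A = n − 1`, then the null space of `A` is spanned by a vector with all entries
positive, and no vector with all entries positive lies in the range of `A`. -/
theorem stmt17 (n : ℕ) (A : Matrix (Fin n) (Fin n) ℝ) (hA : A.PosSemidef)
    (hneg : ∀ i j, i ≠ j → A i j < 0) (hrank : A.rank + 1 = n) :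
    (∃ v : Fin n → ℝ, (∀ i, 0 < v i) ∧ A.mulVec v = 0 ∧
      ∀ u : Fin n → ℝ, A.mulVec u = 0 → ∃ c : ℝ, u = c • v) ∧
    ∀ w : Fin n → ℝ, (∀ i, 0 < w i) → ¬ ∃ x : Fin n → ℝ, A.mulVec x = w := by
  have hn : 0 < n := by omega
  have hsymm : Aᵀ = A := by
    have := hA.1
    simpa [Matrix.IsHermitian, Matrix.conjTranspose_eq_transpose_of_trivial] using this
  -- kernel has dimension 1
  have hker : Module.finrank ℝ ↥(LinearMap.ker A.mulVecLin) = 1 := by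
    have h := LinearMap.finrank_range_add_finrank_ker A.mulVecLin
    have h2 : Module.finrank ℝ (Fin n → ℝ) = n := by simp
    rw [h2] at h
    have h3 : A.rank = Module.finrank ℝ ↥(LinearMap.range A.mulVecLin) := rfl
    omega
  -- get a nonzero kernel vector
  have hne : LinearMap.ker A.mulVecLin ≠ ⊥ := by
    intro hbot
    rw [hbot] at hker
    simp at hker
  obtain ⟨u, hu, hu0⟩ := Submodule.ne_bot_iff _ |>.mp hne
  have hAu : A.mulVec u = 0 := hu
  -- v = |u| is in the kernel
  set v : Fin n → ℝ := fun i => |u i| with hv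
  have hq : v ⬝ᵥ A.mulVec v ≤ u ⬝ᵥ A.mulVec u := by
    simp only [dotProduct, mulVec, Finset.mul_sum]
    refine Finset.sum_le_sum fun i _ => Finset.sum_le_sum fun j _ => ?_
    rcases eq_or_ne i j with rfl | hij
    · simp only [hv]
      rw [show |u i| * (A i i * |u i|) = A i i * (|u i| * |u i|) by ring,
        abs_mul_abs_self]
      ring_nf
      exact le_refl _
    · have hij' := hneg i j hij
      simp only [hv]
      rw [show |u i| * (A i j * |u j|) = A i j * (|u i| * |u j|) by ring,
        show u i * (A i j * u j) = A i j * (u i * u j) by ring]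
      apply mul_le_mul_of_nonpos_left _ hij'.le
      calc u i * u j ≤ |u i * u j| := le_abs_self _
        _ = |u i| * |u j| := abs_mul _ _
  have hq0 : v ⬝ᵥ A.mulVec v = 0 := by
    have h1 : (0:ℝ) ≤ v ⬝ᵥ A.mulVec v := by
      have := hA.dotProduct_mulVec_nonneg v
      simpa using this
    have h2 : u ⬝ᵥ A.mulVec u = 0 := by rw [hAu]; simp
    linarith
  have hAv : A.mulVec v = 0 := by
    have := hA.dotProduct_mulVec_zero_iff v
    simp only [star_trivial] at this
    exact this.mp hq0
  -- v is nonzero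
  have hvne : v ≠ 0 := by
    intro h
    apply hu0
    funext i
    have : |u i| = 0 := congrFun h i
    simpa using abs_eq_zero.mp this
  -- v is positive
  have hvpos : ∀ i, 0 < v i := by
    intro i
    rcases lt_or_eq_of_le (abs_nonneg (u i)) with h | h
    · exact h
    · exfalso
      have hrow : (A.mulVec v) i = 0 := by rw [hAv]; rfl
      have hterm : ∀ j ∈ Finset.univ, A i j * v j ≤ 0 := by
        intro j _
        rcases eq_or_ne i j with rfl | hij
        · rw [hv]; simp [← h]
        · exact mul_nonpos_of_nonpos_of_nonneg (hneg i j hij).le (abs_nonneg _)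
      have hsum : ∑ j, A i j * v j = 0 := by
        simpa [mulVec, dotProduct] using hrow
      have hall := (Finset.sum_eq_zero_iff_of_nonpos hterm).mp hsum
      apply hvne
      funext j
      rcases eq_or_ne i j with rfl | hij
      · simp [hv, ← h]
      · have := hall j (Finset.mem_univ j)
        have hAij := (hneg i j hij).ne
        have : v j = 0 := by
          rcases mul_eq_zero.mp this with h' | h'
          · exact absurd h' hAij
          · exact h'
        simpa using this
  -- kernel = span of v
  have hspan : LinearMap.ker A.mulVecLin = Submodule.span ℝ {v} := by
    symm
    apply Submodule.eq_of_le_of_finrank_le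
    · rw [Submodule.span_le, Set.singleton_subset_iff]
      exact hAv
    · rw [hker, finrank_span_singleton hvne]
  refine ⟨⟨v, hvpos, hAv, ?_⟩, ?_⟩
  · intro u' hu'
    have : u' ∈ Submodule.span ℝ {v} := by rw [← hspan]; exact hu'
    obtain ⟨c, hc⟩ := Submodule.mem_span_singleton.mp this
    exact ⟨c, hc.symm⟩
  · rintro w hw ⟨x, hx⟩
    have h1 : v ⬝ᵥ w = 0 := by
      rw [← hx, dotProduct_mulVec, ← Matrix.mulVec_transpose, hsymm, hAv]
      simp
    have h2 : 0 < v ⬝ᵥ w := by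
      apply Finset.sum_pos
      · intro i _
        exact mul_pos (hvpos i) (hw i)
      · have : Nonempty (Fin n) := ⟨⟨0, hn⟩⟩
        exact Finset.univ_nonempty
    linarith
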